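/- Let α be a type of data points, C a type of labels, L : α → C a labeling function, D a finite nonempty set of elements of α, and IsNew_L the label-induced oracle. Then for every k with 1 ≤ k ≤ |D| there exists a sequence ⟨d₁,…,dₖ⟩ of elements of D with AggWasted(⟨d₁,…,dₖ⟩) = 0, where wasted opportunities are computed with respect to candidates drawn from D; that is, under the label-induced oracle a perfect (zero-wastage) ordered diversity sample of any length up to |D| always exists. -/

import Mathlib

open scoped Classical

/-- The label-induced oracle: on a nonempty sequence `⟨d₁,…,dₖ⟩` it returns
`0` if `L dₖ = L dᵢ` for some `i < k`, and `1` otherwise. -/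
noncomputable def isNewL {α C : Type*} (L : α → C) (l : List α) : ℕ :=
  match l.reverse with
  | [] => 1
  | d :: rest => if ∃ x ∈ rest, L d = L x then 0 else 1

/-- `Wasted(⟨d₁,…,dₖ⟩) = 1` iff `IsNew(⟨d₁,…,dₖ⟩) = 0` and there exists `d ∈ D`
with `IsNew(⟨d₁,…,d_{k−1},d⟩) = 1`; otherwise it is `0`. -/
noncomputable def wasted {α : Type*} (isNew : List α → ℕ) (D : Finset α) (l : List α) : ℕ :=
  if isNew l = 0 ∧ ∃ d ∈ D, isNew (l.dropLast ++ [d]) = 1 then 1 else 0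

/-- `AggWasted(⟨d₁,…,dₖ⟩) = Σ_{i=1}^{k} Wasted(⟨d₁,…,dᵢ⟩)`. -/
noncomputable def aggWasted {α : Type*} (isNew : List α → ℕ) (D : Finset α) (l : List α) : ℕ :=
  ∑ i ∈ Finset.range l.length, wasted isNew D (l.take (i + 1))

lemma isNewL_concat {α C : Type*} (L : α → C) (xs : List α) (d : α) :
    isNewL L (xs ++ [d]) = if ∃ x ∈ xs, L d = L x then 0 else 1 := by
  unfold isNewL
  rw [List.reverse_append]
  simp

/-- Under the label-induced oracle, for every `k` with `1 ≤ k ≤ |D|` there is a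
sequence of `k` elements of `D` whose aggregated wasted opportunity is `0`:
a perfect zero-wastage ordered diversity sample of any length up to `|D|`
always exists. -/
theorem exists_zero_wastage_sample {α C : Type*}
    (L : α → C) (D : Finset α) (hD : D.Nonempty) :
    ∀ k : ℕ, 1 ≤ k → k ≤ D.card →
      ∃ l : List α, l.length = k ∧ (∀ d ∈ l, d ∈ D) ∧
        aggWasted (isNewL L) D l = 0 := by
  intro k hk1 hk2
  classical
  set T := D.image L with hT
  obtain ⟨d₀, hd₀D⟩ := hD
  have : Inhabited α := ⟨d₀⟩
  have hmem : ∀ c ∈ T, ∃ a ∈ D, L a = c := by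
    intro c hc
    simpa [hT, Finset.mem_image] using hc
  choose! f hfD hfL using hmem
  set reps : List α := T.toList.map f with hreps
  have hrepsD : ∀ x ∈ reps, x ∈ D := by
    intro x hx
    rw [hreps, List.mem_map] at hx
    obtain ⟨c, hc, rfl⟩ := hx
    exact hfD c (Finset.mem_toList.mp hc)
  have hrepsL : reps.map L = T.toList := by
    rw [hreps, List.map_map]
    conv_rhs => rw [← List.map_id T.toList]
    apply List.map_congr_left
    intro c hc
    simp [hfL c (Finset.mem_toList.mp hc)]
  have hnodup : (reps.map L).Nodup := hrepsL ▸ T.nodup_toList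
  have hcover : ∀ d ∈ D, ∃ x ∈ reps, L d = L x := by
    intro d hd
    have h1 : L d ∈ T := Finset.mem_image_of_mem L hd
    have h2 : L d ∈ reps.map L := by rw [hrepsL]; exact Finset.mem_toList.mpr h1
    obtain ⟨x, hx, hLx⟩ := List.mem_map.mp h2
    exact ⟨x, hx, hLx.symm⟩
  set full : List α := reps ++ List.replicate k d₀ with hfull
  have hfulllen : k ≤ full.length := by simp [hfull]
  refine ⟨full.take k, by simp [List.length_take]; omega, ?_, ?_⟩
  · intro d hd
    rcases List.mem_append.mp (List.mem_of_mem_take hd) with h | h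
    · exact hrepsD d h
    · rw [List.eq_of_mem_replicate h]; exact hd₀D
  · unfold aggWasted
    apply Finset.sum_eq_zero
    intro i hi
    rw [Finset.mem_range, List.length_take] at hi
    have hik : i < k := lt_of_lt_of_le hi (min_le_left _ _)
    have hifull : i < full.length := lt_of_lt_of_le hik hfulllen
    have htake : (full.take k).take (i + 1) = full.take (i + 1) := by
      rw [List.take_take, min_eq_left (by omega)]
    have hdecomp : full.take (i + 1) = full.take i ++ [full.get ⟨i, hifull⟩] := by
      have h := List.take_concat_get hifull
      simp only [List.concat_eq_append, List.get_eq_getElem] at h ⊢; exact h.symm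
    rw [htake, hdecomp]
    by_cases hcase : i < reps.length
    · -- label of the new element is fresh
      have hpref : full.take (i+1) = reps.take (i+1) :=
        List.take_append_of_le_length (by omega)
      have hnd : ((full.take (i+1)).map L).Nodup := by
        rw [hpref, List.map_take]
        exact (List.take_sublist _ _).nodup hnodup
      rw [hdecomp, List.map_append] at hnd
      have hnotmem : ∀ x ∈ full.take i, L (full.get ⟨i, hifull⟩) ≠ L x := by
        intro x hx h
        have hdisj := (List.nodup_append'.mp hnd).2.2
        have hm : L (full.get ⟨i, hifull⟩) ∈ (full.take i).map L := by
          rw [h]; exact List.mem_map_of_mem hx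
        exact hdisj hm (List.mem_singleton_self _)
      unfold wasted
      rw [if_neg]
      rintro ⟨h0, -⟩
      rw [isNewL_concat, if_neg] at h0
      · exact one_ne_zero h0
      · rintro ⟨x, hx, hLx⟩
        exact hnotmem x hx hLx
    · -- all labels already exhausted
      have hsub : ∀ x ∈ reps, x ∈ full.take i := by
        intro x hx
        have heq : full.take i = reps ++ (List.replicate k d₀).take (i - reps.length) := by
          rw [hfull, show i = reps.length + (i - reps.length) by omega, List.take_append]
          simp
        rw [heq]
        exact List.mem_append_left _ hx
      unfold wasted
      rw [if_neg]
      rintro ⟨-, d, hd, h1⟩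
      rw [List.dropLast_concat, isNewL_concat, if_pos] at h1
      · exact one_ne_zero h1.symm
      · obtain ⟨x, hx, hLx⟩ := hcover d hd
        exact ⟨x, hsub x hx, hLx⟩
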